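/- Suppose u(t,s,i) = d(t)s² + c(t,i)s + f(t,i) where d solves d' − 2κd + κ²/(2η²(1+ε)) = 0 with d(T)=0, and c(·,i), f(·,i) solve the coupled linear ODE systems c'(t,i) − κc(t,i) + 2κθᵢd(t) − (κ²θᵢ − κη²/2 + κρση)/(η²(1+ε)) + Σ_j c(t,j)q^{ij} = 0 and f'(t,i) + d(t)η² + κθᵢc(t,i) + (κθᵢ − η²/2 + ρση)²/(2η²(1+ε)) + Σ_j f(t,j)q^{ij} = 0 with c(T,i)=f(T,i)=0. Then u satisfies the PDE u_t + κ(θᵢ−s)u_s + (η²/2)u_{ss} + Σ_j u(t,s,j)q^{ij} + (κ(θᵢ−s) − η²/2 + ρση)²/(2η²(1+ε)) = 0 with u(T,s,i)=0 for all s ∈ ℝ and i ∈ {1,…,K}. -/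

import Mathlib

/-- Verification that the quadratic-in-`s` ansatz `u(t,s,i) = d(t)s² + c(t,i)s + f(t,i)`,
with `d`, `c`, `f` solving the stated ODE systems with zero terminal conditions,
satisfies the Feynman–Kac PDE
`u_t + κ(θᵢ−s)u_s + (η²/2)u_{ss} + Σ_j u(t,s,j)q^{ij}
  + (κ(θᵢ−s) − η²/2 + ρση)²/(2η²(1+ε)) = 0` with `u(T,s,i) = 0`. -/
theorem stmt_8 (K : ℕ) (hK : 0 < K) (q : Fin K → Fin K → ℝ)
    (hQ : ∀ i, ∑ j, q i j = 0) (θ : Fin K → ℝ)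
    (κ η σ ρ ε T : ℝ) (hκ : 0 < κ) (hη : 0 < η) (hσ : 0 < σ)
    (hρ : ρ ∈ Set.Ioo (-1 : ℝ) 1) (hε : 0 ≤ ε) (hT : 0 < T)
    (d : ℝ → ℝ) (c f : ℝ → Fin K → ℝ)
    (hd : ∀ t : ℝ, HasDerivAt d (2 * κ * d t - κ ^ 2 / (2 * η ^ 2 * (1 + ε))) t)
    (hdT : d T = 0)
    (hc : ∀ t : ℝ, ∀ i, HasDerivAt (fun τ => c τ i)
      (κ * c t i - 2 * κ * θ i * d t
        + (κ ^ 2 * θ i - κ * η ^ 2 / 2 + κ * ρ * σ * η) / (η ^ 2 * (1 + ε))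
        - ∑ j, c t j * q i j) t)
    (hcT : ∀ i, c T i = 0)
    (hf : ∀ t : ℝ, ∀ i, HasDerivAt (fun τ => f τ i)
      (-(d t * η ^ 2) - κ * θ i * c t i
        - (κ * θ i - η ^ 2 / 2 + ρ * σ * η) ^ 2 / (2 * η ^ 2 * (1 + ε))
        - ∑ j, f t j * q i j) t)
    (hfT : ∀ i, f T i = 0)
    (u : ℝ → ℝ → Fin K → ℝ)
    (hu : ∀ t s i, u t s i = d t * s ^ 2 + c t i * s + f t i) :
    (∀ (t s : ℝ) (i : Fin K),
        deriv (fun τ => u τ s i) t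
          + κ * (θ i - s) * deriv (fun x => u t x i) s
          + η ^ 2 / 2 * deriv (deriv (fun x => u t x i)) s
          + (∑ j, u t s j * q i j)
          + (κ * (θ i - s) - η ^ 2 / 2 + ρ * σ * η) ^ 2 / (2 * η ^ 2 * (1 + ε)) = 0) ∧
      (∀ (s : ℝ) (i : Fin K), u T s i = 0) := by
  constructor
  · intro t s i
    have hne : η ^ 2 * (1 + ε) ≠ 0 := by positivity
    -- time derivative
    have ht : HasDerivAt (fun τ => u τ s i)
        ((2 * κ * d t - κ ^ 2 / (2 * η ^ 2 * (1 + ε))) * s ^ 2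
          + (κ * c t i - 2 * κ * θ i * d t
            + (κ ^ 2 * θ i - κ * η ^ 2 / 2 + κ * ρ * σ * η) / (η ^ 2 * (1 + ε))
            - ∑ j, c t j * q i j) * s
          + (-(d t * η ^ 2) - κ * θ i * c t i
            - (κ * θ i - η ^ 2 / 2 + ρ * σ * η) ^ 2 / (2 * η ^ 2 * (1 + ε))
            - ∑ j, f t j * q i j)) t := by
      have := (((hd t).mul_const (s ^ 2)).add ((hc t i).mul_const s)).add (hf t i)
      simpa only [hu, Pi.add_def] using this
    have hx : ∀ x : ℝ, HasDerivAt (fun x => u t x i) (2 * d t * x + c t i) x := by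
      intro x
      have h1 : HasDerivAt (fun x : ℝ => d t * x ^ 2 + c t i * x + f t i)
          (d t * (2 * x) + c t i) x := by
        have := (((hasDerivAt_pow 2 x).const_mul (d t)).add
          ((hasDerivAt_id x).const_mul (c t i))).add_const (f t i)
        simpa using this
      have h2 : (fun x => u t x i) = fun x : ℝ => d t * x ^ 2 + c t i * x + f t i := by
        funext x; exact hu t x i
      rw [h2]; convert h1 using 1; ring
    have hds : deriv (fun x => u t x i) s = 2 * d t * s + c t i := (hx s).deriv
    have hdd : deriv (fun x => u t x i) = fun x => 2 * d t * x + c t i := by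
      funext x; exact (hx x).deriv
    have hd2 : deriv (deriv (fun x => u t x i)) s = 2 * d t := by
      rw [hdd]
      have : HasDerivAt (fun x : ℝ => 2 * d t * x + c t i) (2 * d t) s := by
        simpa using ((hasDerivAt_id s).const_mul (2 * d t)).add_const (c t i)
      exact this.deriv
    have hsum : (∑ j, u t s j * q i j)
        = d t * s ^ 2 * (∑ j, q i j) + (∑ j, c t j * q i j) * s + ∑ j, f t j * q i j := by
      rw [Finset.mul_sum, Finset.sum_mul]
      rw [← Finset.sum_add_distrib, ← Finset.sum_add_distrib]
      apply Finset.sum_congr rfl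
      intro j _
      rw [hu]; ring
    rw [ht.deriv, hds, hd2, hsum, hQ i]
    field_simp
    ring
  · intro s i
    rw [hu, hdT, hcT, hfT]; ring
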